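/- Let G be a simple connected graph and let G* be the graph obtained from G by replacing each edge uv by a 4-cycle u x v y u with two new vertices x, y. Then G* is bipartite, with one side of the bipartition consisting only of vertices of degree 2, and pd(G) = 1 if and only if pd(G*) = 1. -/

import Mathlib

open SimpleGraph

variable {V : Type*}

/-- Two edges are adjacent: distinct and sharing an endpoint. -/
def EdgesAdj (e₁ e₂ : Sym2 V) : Prop := e₁ ≠ e₂ ∧ ∃ v, v ∈ e₁ ∧ v ∈ e₂

/-- `F` is an edge-cut of `G` separating `x` and `y`. -/
def IsSepCut (G : SimpleGraph V) (F : Set (Sym2 V)) (x y : V) : Prop :=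
  F ⊆ G.edgeSet ∧ ¬ (G.deleteEdges F).Reachable x y

/-- `F` is a proper edge-cut (w.r.t. edge-coloring `c`) separating `x` and `y`. -/
def IsProperSepCut (G : SimpleGraph V) (c : Sym2 V → ℕ) (F : Set (Sym2 V)) (x y : V) : Prop :=
  IsSepCut G F x y ∧ ∀ e₁ ∈ F, ∀ e₂ ∈ F, EdgesAdj e₁ e₂ → c e₁ ≠ c e₂

/-- `F` is a rainbow edge-cut separating `x` and `y`. -/
def IsRainbowSepCut (G : SimpleGraph V) (c : Sym2 V → ℕ) (F : Set (Sym2 V)) (x y : V) : Prop :=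
  IsSepCut G F x y ∧ Set.InjOn c F

/-- `F` is a matching cut separating `x` and `y`. -/
def IsMatchingSepCut (G : SimpleGraph V) (F : Set (Sym2 V)) (x y : V) : Prop :=
  IsSepCut G F x y ∧ ∀ e₁ ∈ F, ∀ e₂ ∈ F, ¬ EdgesAdj e₁ e₂

/-- The proper disconnection number. -/
noncomputable def pd (G : SimpleGraph V) : ℕ :=
  sInf {k | ∃ c : Sym2 V → ℕ, (∀ e ∈ G.edgeSet, c e < k) ∧
    ∀ x y : V, x ≠ y → ∃ F, IsProperSepCut G c F x y}

/-- The rainbow disconnection number. -/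
noncomputable def rd (G : SimpleGraph V) : ℕ :=
  sInf {k | ∃ c : Sym2 V → ℕ, (∀ e ∈ G.edgeSet, c e < k) ∧
    ∀ x y : V, x ≠ y → ∃ F, IsRainbowSepCut G c F x y}

/-- The chromatic index. -/
noncomputable def chromIndex (G : SimpleGraph V) : ℕ :=
  sInf {k | ∃ c : Sym2 V → ℕ, (∀ e ∈ G.edgeSet, c e < k) ∧
    ∀ e₁ ∈ G.edgeSet, ∀ e₂ ∈ G.edgeSet, EdgesAdj e₁ e₂ → c e₁ ≠ c e₂}

/-- The graph obtained from `G` by replacing each edge by a 4-cycle through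
two new vertices. -/
def starG {V : Type*} (G : SimpleGraph V) : SimpleGraph (V ⊕ (G.edgeSet × Bool)) :=
  SimpleGraph.fromRel (fun a b =>
    ∃ (u : V) (e : G.edgeSet) (x : Bool),
      a = Sum.inl u ∧ b = Sum.inr (e, x) ∧ u ∈ (e : Sym2 V))

open scoped Classical

namespace Stmt15

noncomputable def efst (e : Sym2 V) : V := (Quot.out e).1
noncomputable def esnd (e : Sym2 V) : V := (Quot.out e).2

lemma mk_efst_esnd (e : Sym2 V) : s(efst e, esnd e) = e := by
  conv_rhs => rw [← Quot.out_eq e]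
  rfl

lemma mem_cases {e : Sym2 V} {u : V} (h : u ∈ e) : u = efst e ∨ u = esnd e := by
  rw [← mk_efst_esnd e] at h; exact Sym2.mem_iff.mp h

lemma efst_mem (e : Sym2 V) : efst e ∈ e := Sym2.out_fst_mem e
lemma esnd_mem (e : Sym2 V) : esnd e ∈ e := Sym2.out_snd_mem e

variable {G : SimpleGraph V}

lemma efst_ne_esnd {e : Sym2 V} (he : e ∈ G.edgeSet) : efst e ≠ esnd e := by
  intro h
  exact G.not_isDiag_of_mem_edgeSet he
    (by rw [← mk_efst_esnd e]; exact Sym2.mk_isDiag_iff.mpr h)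

lemma adj_fst_snd {e : Sym2 V} (he : e ∈ G.edgeSet) : G.Adj (efst e) (esnd e) := by
  rw [← SimpleGraph.mem_edgeSet, mk_efst_esnd]; exact he

lemma starG_adj_cases {a b : V ⊕ (G.edgeSet × Bool)} (h : (starG G).Adj a b) :
    (∃ u E x, a = Sum.inl u ∧ b = Sum.inr (E, x) ∧ u ∈ (E : Sym2 V)) ∨
    (∃ u E x, b = Sum.inl u ∧ a = Sum.inr (E, x) ∧ u ∈ (E : Sym2 V)) := by
  rw [starG, fromRel_adj] at h
  rcases h.2 with ⟨u, E, x, h1, h2, h3⟩ | ⟨u, E, x, h1, h2, h3⟩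
  · exact Or.inl ⟨u, E, x, h1, h2, h3⟩
  · exact Or.inr ⟨u, E, x, h1, h2, h3⟩

lemma starG_adj_inl_inr {u : V} {E : G.edgeSet} {b : Bool} (h : u ∈ (E : Sym2 V)) :
    (starG G).Adj (Sum.inl u) (Sum.inr (E, b)) := by
  rw [starG, fromRel_adj]
  exact ⟨by simp, Or.inl ⟨u, E, b, rfl, rfl, h⟩⟩

def lift (G : SimpleGraph V) (F : Set (Sym2 V)) (hF : F ⊆ G.edgeSet) (τ : Sym2 V → Bool) :
    Set (Sym2 (V ⊕ (G.edgeSet × Bool))) :=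
  { w | ∃ e, ∃ he : e ∈ F,
      w = s(Sum.inl (efst e), Sum.inr (⟨e, hF he⟩, τ e)) ∨
      w = s(Sum.inl (esnd e), Sum.inr (⟨e, hF he⟩, !τ e)) }

noncomputable def rho (F : Set (Sym2 V)) (τ : Sym2 V → Bool) :
    (V ⊕ (G.edgeSet × Bool)) → V
  | Sum.inl u => u
  | Sum.inr (E, b) =>
      if (E : Sym2 V) ∈ F ∧ b = τ (E : Sym2 V) then esnd (E : Sym2 V) else efst (E : Sym2 V)

lemma lift_subset (F : Set (Sym2 V)) (hF : F ⊆ G.edgeSet) (τ : Sym2 V → Bool) :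
    lift G F hF τ ⊆ (starG G).edgeSet := by
  rintro w ⟨e, he, h | h⟩ <;> subst h <;> rw [SimpleGraph.mem_edgeSet]
  · exact starG_adj_inl_inr (efst_mem e)
  · exact starG_adj_inl_inr (esnd_mem e)

lemma lift_matching (F : Set (Sym2 V)) (hF : F ⊆ G.edgeSet) (τ : Sym2 V → Bool)
    (hm : ∀ e₁ ∈ F, ∀ e₂ ∈ F, ¬ EdgesAdj e₁ e₂) :
    ∀ w₁ ∈ lift G F hF τ, ∀ w₂ ∈ lift G F hF τ, ¬ EdgesAdj w₁ w₂ := by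
  rintro w₁ ⟨e₁, h1, hw1⟩ w₂ ⟨e₂, h2, hw2⟩ ⟨hne, a, ha1, ha2⟩
  by_cases hee : e₁ = e₂
  · subst hee
    rcases hw1 with rfl | rfl <;> rcases hw2 with rfl | rfl <;>
      [skip; skip; skip; skip] <;>
      first
        | exact hne rfl
        | (rcases Sym2.mem_iff.mp ha1 with rfl | rfl <;>
           rcases Sym2.mem_iff.mp ha2 with h | h <;>
           simp_all [efst_ne_esnd (hF h1), (efst_ne_esnd (hF h1)).symm])
  · refine hm e₁ h1 e₂ h2 ⟨hee, ?_⟩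
    have key : ∀ (u₁ u₂ : V) (z₁ z₂ : G.edgeSet × Bool), u₁ ∈ e₁ → u₂ ∈ e₂ →
        ((z₁.1 : Sym2 V) = e₁) → ((z₂.1 : Sym2 V) = e₂) →
        a ∈ s(Sum.inl u₁, Sum.inr z₁) → a ∈ s(Sum.inl u₂, Sum.inr z₂) →
        ∃ v, v ∈ e₁ ∧ v ∈ e₂ := by
      intro u₁ u₂ z₁ z₂ hu1 hu2 hz1 hz2 m1 m2
      rcases Sym2.mem_iff.mp m1 with rfl | rfl <;> rcases Sym2.mem_iff.mp m2 with h | h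
      · exact ⟨u₁, hu1, by rw [Sum.inl.inj h]; exact hu2⟩
      · exact absurd h (by simp)
      · exact absurd h (by simp)
      · exfalso; apply hee; rw [← hz1, ← hz2, Sum.inr.inj h]
    rcases hw1 with rfl | rfl <;> rcases hw2 with rfl | rfl
    · exact key _ _ _ _ (efst_mem e₁) (efst_mem e₂) rfl rfl ha1 ha2
    · exact key _ _ _ _ (efst_mem e₁) (esnd_mem e₂) rfl rfl ha1 ha2
    · exact key _ _ _ _ (esnd_mem e₁) (efst_mem e₂) rfl rfl ha1 ha2
    · exact key _ _ _ _ (esnd_mem e₁) (esnd_mem e₂) rfl rfl ha1 ha2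

lemma rho_adj {F : Set (Sym2 V)} {hF : F ⊆ G.edgeSet} {τ : Sym2 V → Bool}
    {p q : V ⊕ (G.edgeSet × Bool)}
    (h : ((starG G).deleteEdges (lift G F hF τ)).Adj p q) :
    (G.deleteEdges F).Reachable (rho F τ p) (rho F τ q) := by
  rw [SimpleGraph.deleteEdges_adj] at h
  obtain ⟨hadj, hnot⟩ := h
  have key : ∀ (u : V) (E : G.edgeSet) (b : Bool), u ∈ (E : Sym2 V) →
      s(Sum.inl u, Sum.inr (E, b)) ∉ lift G F hF τ →
      (G.deleteEdges F).Reachable (rho F τ (Sum.inl u : V ⊕ (G.edgeSet × Bool)))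
        (rho F τ (Sum.inr (E, b))) := by
    intro u E b hu hn
    have heE : (E : Sym2 V) ∈ G.edgeSet := E.2
    simp only [rho]
    by_cases hEF : (E : Sym2 V) ∈ F
    · by_cases hb : b = τ (E : Sym2 V)
      · rw [if_pos ⟨hEF, hb⟩]
        rcases mem_cases hu with rfl | rfl
        · exact absurd ⟨(E : Sym2 V), hEF, Or.inl (by rw [hb])⟩ hn
        · exact Reachable.refl _
      · rw [if_neg (by rintro ⟨-, hb'⟩; exact hb hb')]
        have hb2 : b = !τ (E : Sym2 V) := by
          revert hb; cases b <;> cases τ (E : Sym2 V) <;> simp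
        rcases mem_cases hu with rfl | rfl
        · exact Reachable.refl _
        · exact absurd ⟨(E : Sym2 V), hEF, Or.inr (by rw [hb2])⟩ hn
    · rw [if_neg (by rintro ⟨h', -⟩; exact hEF h')]
      rcases mem_cases hu with rfl | rfl
      · exact Reachable.refl _
      · refine ((SimpleGraph.deleteEdges_adj).mpr ⟨(adj_fst_snd heE).symm, ?_⟩).reachable
        rw [Sym2.eq_swap, mk_efst_esnd]
        exact hEF
  rcases starG_adj_cases hadj with ⟨u, E, b, rfl, rfl, hu⟩ | ⟨u, E, b, rfl, rfl, hu⟩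
  · exact key u E b hu hnot
  · exact (key u E b hu (by rwa [Sym2.eq_swap])).symm

lemma rho_reach {F : Set (Sym2 V)} {hF : F ⊆ G.edgeSet} {τ : Sym2 V → Bool}
    {p q : V ⊕ (G.edgeSet × Bool)}
    (h : ((starG G).deleteEdges (lift G F hF τ)).Reachable p q) :
    (G.deleteEdges F).Reachable (rho F τ p) (rho F τ q) := by
  obtain ⟨w⟩ := h
  induction w with
  | nil => exact Reachable.refl _
  | cons h _ ih => exact (rho_adj h).trans ih

lemma rho_target {F : Set (Sym2 V)} (hF : F ⊆ G.edgeSet) {τ : Sym2 V → Bool}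
    {E : G.edgeSet} {b : Bool} {w : V} (hw : w ∈ (E : Sym2 V))
    (hτ : τ (E : Sym2 V) = (if w = esnd (E : Sym2 V) then b else !b)) :
    (G.deleteEdges F).Reachable (rho F τ (Sum.inr (E, b))) w := by
  have heE : (E : Sym2 V) ∈ G.edgeSet := E.2
  have hne := efst_ne_esnd heE
  simp only [rho]
  rcases mem_cases hw with rfl | rfl
  · rw [if_neg hne] at hτ
    rw [if_neg (by rintro ⟨-, hb⟩; rw [hτ] at hb; simp at hb)]
  · rw [if_pos rfl] at hτ
    by_cases hEF : (E : Sym2 V) ∈ F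
    · rw [if_pos ⟨hEF, hτ.symm⟩]
    · rw [if_neg (fun hc => hEF hc.1)]
      refine ((SimpleGraph.deleteEdges_adj).mpr ⟨adj_fst_snd heE, ?_⟩).reachable
      rw [mk_efst_esnd]
      exact hEF

end Stmt15

namespace Stmt15
variable {G : SimpleGraph V}

lemma rho_inl (F : Set (Sym2 V)) (τ : Sym2 V → Bool) (x : V) :
    rho F τ (Sum.inl x : V ⊕ (G.edgeSet × Bool)) = x := rfl

lemma sep_lift {F : Set (Sym2 V)} (hsub : F ⊆ G.edgeSet) {w w' : V}
    (hnr : ¬ (G.deleteEdges F).Reachable w w')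
    (hmatch : ∀ e₁ ∈ F, ∀ e₂ ∈ F, ¬ EdgesAdj e₁ e₂) (τ : Sym2 V → Bool)
    {p q : V ⊕ (G.edgeSet × Bool)}
    (hp : (G.deleteEdges F).Reachable (rho F τ p) w)
    (hq : (G.deleteEdges F).Reachable (rho F τ q) w') :
    IsMatchingSepCut (starG G) (lift G F hsub τ) p q := by
  refine ⟨⟨lift_subset _ _ _, fun hr => hnr ?_⟩, lift_matching _ _ _ hmatch⟩
  exact hp.symm.trans ((rho_reach hr).trans hq)

lemma main_fwd (h : ∀ x y : V, x ≠ y → ∃ F, IsMatchingSepCut G F x y)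
    (p q : V ⊕ (G.edgeSet × Bool)) (hpq : p ≠ q) :
    ∃ F', IsMatchingSepCut (starG G) F' p q := by
  rcases p with x | ⟨E, b⟩ <;> rcases q with y | ⟨E', b'⟩
  · have hxy : x ≠ y := fun hh => hpq (by rw [hh])
    obtain ⟨F, ⟨hsub, hnr⟩, hmatch⟩ := h x y hxy
    exact ⟨_, sep_lift hsub hnr hmatch (fun _ => true)
      (by rw [rho_inl]) (by rw [rho_inl])⟩
  · set e : Sym2 V := (E' : Sym2 V) with he
    have heE : e ∈ G.edgeSet := E'.2
    set w' : V := if x = efst e then esnd e else efst e with hw'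
    have hmem : w' ∈ e := by
      rw [hw']; split
      · exact esnd_mem e
      · exact efst_mem e
    have hxw : x ≠ w' := by
      rw [hw']; split
      · rename_i hx; rw [hx]; exact efst_ne_esnd heE
      · rename_i hx; exact hx
    obtain ⟨F, ⟨hsub, hnr⟩, hmatch⟩ := h x w' hxw
    exact ⟨_, sep_lift hsub hnr hmatch (fun _ => if w' = esnd e then b' else !b')
      (by rw [rho_inl]) (rho_target hsub hmem rfl)⟩
  · set e : Sym2 V := (E : Sym2 V) with he
    have heE : e ∈ G.edgeSet := E.2
    set w : V := if y = efst e then esnd e else efst e with hw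
    have hmem : w ∈ e := by
      rw [hw]; split
      · exact esnd_mem e
      · exact efst_mem e
    have hyw : w ≠ y := by
      rw [hw]; split
      · rename_i hx; rw [hx]; exact (efst_ne_esnd heE).symm
      · rename_i hx; exact fun hh => hx hh.symm
    obtain ⟨F, ⟨hsub, hnr⟩, hmatch⟩ := h w y hyw
    exact ⟨_, sep_lift hsub hnr hmatch (fun _ => if w = esnd e then b else !b)
      (rho_target hsub hmem rfl) (by rw [rho_inl])⟩
  · by_cases hEE : E = E'
    · subst hEE
      have hbb : b ≠ b' := by
        intro hh; exact hpq (by rw [hh])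
      set e : Sym2 V := (E : Sym2 V) with he
      have heE : e ∈ G.edgeSet := E.2
      have hne := efst_ne_esnd heE
      obtain ⟨F, ⟨hsub, hnr⟩, hmatch⟩ := h (esnd e) (efst e) hne.symm
      refine ⟨_, sep_lift hsub hnr hmatch (fun _ => b)
        (rho_target hsub (esnd_mem e) (by simp; rfl)) (rho_target hsub (efst_mem e) ?_)⟩
      rw [if_neg hne]
      revert hbb; cases b <;> cases b' <;> simp
    · have hee : (E : Sym2 V) ≠ (E' : Sym2 V) := fun hh => hEE (Subtype.ext hh)
      set e : Sym2 V := (E : Sym2 V) with he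
      set e' : Sym2 V := (E' : Sym2 V) with he'
      have heE : e ∈ G.edgeSet := E.2
      have heE' : e' ∈ G.edgeSet := E'.2
      obtain ⟨w, w', hwmem, hwmem', hww⟩ :
          ∃ w w', w ∈ e ∧ w' ∈ e' ∧ w ≠ w' := by
        by_cases hff : efst e = efst e'
        · refine ⟨esnd e, esnd e', esnd_mem e, esnd_mem e', fun hh => hee ?_⟩
          rw [← mk_efst_esnd e, ← mk_efst_esnd e', hff, hh]
        · exact ⟨efst e, efst e', efst_mem e, efst_mem e', hff⟩
      obtain ⟨F, ⟨hsub, hnr⟩, hmatch⟩ := h w w' hww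
      refine ⟨_, sep_lift hsub hnr hmatch
        (fun f => if f = e then (if w = esnd e then b else !b)
          else (if w' = esnd e' then b' else !b'))
        (rho_target hsub hwmem (by rw [if_pos rfl]))
        (rho_target hsub hwmem' (by rw [if_neg (fun hh => hee hh.symm)]))⟩

end Stmt15

namespace Stmt15
variable {G : SimpleGraph V}

lemma main_bwd
    (h : ∀ p q : V ⊕ (G.edgeSet × Bool), p ≠ q → ∃ F', IsMatchingSepCut (starG G) F' p q)
    (x y : V) (hxy : x ≠ y) : ∃ F, IsMatchingSepCut G F x y := by
  obtain ⟨F', ⟨hsub', hnr'⟩, hmatch'⟩ := h (Sum.inl x) (Sum.inl y) (by simp [hxy])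
  set H := (starG G).deleteEdges F' with hH
  set Fset : Set (Sym2 V) := {e | e ∈ G.edgeSet ∧
      ∀ u v, e = s(u, v) → ¬ H.Reachable (Sum.inl u) (Sum.inl v)} with hFset
  have hFmem : ∀ {e : Sym2 V}, e ∈ Fset ↔ (e ∈ G.edgeSet ∧
      ∀ u v, e = s(u, v) → ¬ H.Reachable (Sum.inl u) (Sum.inl v)) := Iff.rfl
  have claim : ∀ {a b : V}, (G.deleteEdges Fset).Walk a b →
      H.Reachable (Sum.inl a) (Sum.inl b) := by
    intro a b wlk
    induction wlk with
    | nil => exact Reachable.refl _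
    | @cons a' c' b' ha p ih =>
        rw [SimpleGraph.deleteEdges_adj] at ha
        obtain ⟨hadj, hn⟩ := ha
        have hmem : s(a', c') ∈ G.edgeSet := hadj
        have hex : ∃ u v, s(a', c') = s(u, v) ∧ H.Reachable (Sum.inl u) (Sum.inl v) := by
          by_contra hc
          push_neg at hc
          exact hn (hFmem.mpr ⟨hmem, fun u v h1 => hc u v h1⟩)
        obtain ⟨u, v, hesym, hre⟩ := hex
        rcases Sym2.eq_iff.mp hesym with ⟨rfl, rfl⟩ | ⟨rfl, rfl⟩
        · exact hre.trans ih
        · exact hre.symm.trans ih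
  refine ⟨Fset, ⟨fun e he => (hFmem.mp he).1,
    fun hr => hnr' (hr.elim fun w => claim w)⟩, ?_⟩
  rintro e₁ he₁ e₂ he₂ ⟨hne, u, hu1, hu2⟩
  obtain ⟨he1, hr1⟩ := hFmem.mp he₁
  obtain ⟨he2, hr2⟩ := hFmem.mp he₂
  obtain ⟨v₁, hv1⟩ := Sym2.mem_iff_exists.mp hu1
  obtain ⟨v₂, hv2⟩ := Sym2.mem_iff_exists.mp hu2
  have hn1 : ¬ H.Reachable (Sum.inl u) (Sum.inl v₁) := hr1 u v₁ hv1
  have hn2 : ¬ H.Reachable (Sum.inl u) (Sum.inl v₂) := hr2 u v₂ hv2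
  have key : ∀ (e : Sym2 V) (he : e ∈ G.edgeSet) (v : V), e = s(u, v) →
      ¬ H.Reachable (Sum.inl u) (Sum.inl v) →
      ∃ c : Bool, s(Sum.inl u, Sum.inr ((⟨e, he⟩ : G.edgeSet), c)) ∈ F' := by
    intro e he v hev hnr
    have humem : u ∈ e := by rw [hev]; exact Sym2.mem_mk_left u v
    have hvmem : v ∈ e := by rw [hev]; exact Sym2.mem_mk_right u v
    have step : ∀ c : Bool, s(Sum.inl u, Sum.inr ((⟨e, he⟩ : G.edgeSet), c)) ∈ F' ∨
        s(Sum.inl v, Sum.inr ((⟨e, he⟩ : G.edgeSet), c)) ∈ F' := by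
      intro c
      by_contra hc
      push_neg at hc
      apply hnr
      have a1 : H.Adj (Sum.inl u) (Sum.inr (⟨e, he⟩, c)) :=
        SimpleGraph.deleteEdges_adj.mpr ⟨starG_adj_inl_inr humem, hc.1⟩
      have a2 : H.Adj (Sum.inl v) (Sum.inr (⟨e, he⟩, c)) :=
        SimpleGraph.deleteEdges_adj.mpr ⟨starG_adj_inl_inr hvmem, hc.2⟩
      exact a1.reachable.trans a2.symm.reachable
    rcases step true with ht | ht
    · exact ⟨true, ht⟩
    rcases step false with hf | hf
    · exact ⟨false, hf⟩
    exfalso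
    refine hmatch' _ ht _ hf
      ⟨by simp [Sym2.eq_iff], Sum.inl v, Sym2.mem_mk_left _ _, Sym2.mem_mk_left _ _⟩
  obtain ⟨c₁, hc1⟩ := key e₁ he1 v₁ hv1 hn1
  obtain ⟨c₂, hc2⟩ := key e₂ he2 v₂ hv2 hn2
  refine hmatch' _ hc1 _ hc2
    ⟨?_, Sum.inl u, Sym2.mem_mk_left _ _, Sym2.mem_mk_left _ _⟩
  intro hh
  rcases Sym2.eq_iff.mp hh with ⟨-, h2⟩ | ⟨h1, -⟩
  · simp only [Sum.inr.injEq, Prod.mk.injEq, Subtype.mk.injEq] at h2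
    exact hne h2.1
  · simp at h1

end Stmt15

namespace Stmt15
variable {G : SimpleGraph V}

lemma edgeSet_eq_empty_of_subsingleton {α : Type*} [Subsingleton α] (H : SimpleGraph α) :
    H.edgeSet = ∅ := by
  ext e
  simp only [Set.mem_empty_iff_false, iff_false]
  induction e using Sym2.ind with
  | _ a b => exact fun he => H.ne_of_adj ((SimpleGraph.mem_edgeSet H).mp he) (Subsingleton.elim a b)

lemma pd_subsingleton {α : Type*} [Subsingleton α] (H : SimpleGraph α) : pd H = 0 := by
  have h0 : (0 : ℕ) ∈ {k | ∃ c : Sym2 α → ℕ, (∀ e ∈ H.edgeSet, c e < k) ∧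
      ∀ x y : α, x ≠ y → ∃ F, IsProperSepCut H c F x y} :=
    ⟨fun _ => 0, by simp [edgeSet_eq_empty_of_subsingleton H],
      fun x y hxy => absurd (Subsingleton.elim x y) hxy⟩
  unfold pd
  exact Nat.sInf_eq_zero.mpr (Or.inl h0)

lemma pd_eq_one_iff {α : Type*} (H : SimpleGraph α) (hconn : H.Connected)
    (hx : ∃ a b : α, a ≠ b) :
    pd H = 1 ↔ ∀ x y : α, x ≠ y → ∃ F, IsMatchingSepCut H F x y := by
  set S := {k | ∃ c : Sym2 α → ℕ, (∀ e ∈ H.edgeSet, c e < k) ∧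
    ∀ x y : α, x ≠ y → ∃ F, IsProperSepCut H c F x y} with hS
  have hpd : pd H = sInf S := rfl
  have h0 : (0 : ℕ) ∉ S := by
    rintro ⟨c, hc, hsep⟩
    obtain ⟨a, b, hab⟩ := hx
    obtain ⟨F, ⟨hsub, hnr⟩, -⟩ := hsep a b hab
    have hF : F = ∅ := Set.eq_empty_iff_forall_notMem.mpr
      (fun e he => absurd (hc e (hsub he)) (Nat.not_lt_zero _))
    rw [hF, SimpleGraph.deleteEdges_empty] at hnr
    exact hnr (hconn.preconnected a b)
  constructor
  · intro h1
    have hne : S.Nonempty := by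
      by_contra hs
      rw [Set.not_nonempty_iff_eq_empty] at hs
      rw [hpd, hs, Nat.sInf_empty] at h1
      exact one_ne_zero h1.symm
    have hmem : (1 : ℕ) ∈ S := by
      rw [hpd] at h1; rw [← h1]; exact Nat.sInf_mem hne
    obtain ⟨c, hc, hsep⟩ := hmem
    intro x y hxy
    obtain ⟨F, hcut, hprop⟩ := hsep x y hxy
    refine ⟨F, hcut, fun e₁ h1' e₂ h2' hadj => ?_⟩
    have c1 : c e₁ = 0 := Nat.lt_one_iff.mp (hc e₁ (hcut.1 h1'))
    have c2 : c e₂ = 0 := Nat.lt_one_iff.mp (hc e₂ (hcut.1 h2'))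
    exact hprop e₁ h1' e₂ h2' hadj (by rw [c1, c2])
  · intro hm
    have h1 : (1 : ℕ) ∈ S := by
      refine ⟨fun _ => 0, fun e _ => Nat.zero_lt_one, fun x y hxy => ?_⟩
      obtain ⟨F, hcut, hmatch⟩ := hm x y hxy
      exact ⟨F, hcut, fun e₁ h1' e₂ h2' hadj => (hmatch e₁ h1' e₂ h2' hadj).elim⟩
    have hle : sInf S ≤ 1 := Nat.sInf_le h1
    have hnz : sInf S ≠ 0 := fun hz => h0 (hz ▸ Nat.sInf_mem ⟨1, h1⟩)
    rw [hpd]; omega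

lemma star_connected (hconn : G.Connected) : (starG G).Connected := by
  haveI : Nonempty V := hconn.nonempty
  haveI : Nonempty (V ⊕ (G.edgeSet × Bool)) := ⟨Sum.inl (Classical.arbitrary V)⟩
  have key : ∀ u v : V, (starG G).Reachable (Sum.inl u) (Sum.inl v) := by
    intro u v
    obtain ⟨wlk⟩ := hconn.preconnected u v
    induction wlk with
    | nil => exact Reachable.refl _
    | @cons a c b ha p ih =>
        have he : s(a, c) ∈ G.edgeSet := (SimpleGraph.mem_edgeSet (G := G)).mpr ha
        have h1 : (starG G).Adj (Sum.inl a) (Sum.inr (⟨s(a, c), he⟩, true)) :=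
          starG_adj_inl_inr (Sym2.mem_mk_left a c)
        have h2 : (starG G).Adj (Sum.inl c) (Sum.inr (⟨s(a, c), he⟩, true)) :=
          starG_adj_inl_inr (Sym2.mem_mk_right a c)
        exact (h1.reachable.trans h2.symm.reachable).trans ih
  have anch : ∀ p : V ⊕ (G.edgeSet × Bool), ∃ u : V, (starG G).Reachable p (Sum.inl u) := by
    rintro (u | ⟨E, b⟩)
    · exact ⟨u, Reachable.refl _⟩
    · exact ⟨efst (E : Sym2 V), ((starG_adj_inl_inr (efst_mem _)).symm).reachable⟩
  constructor
  intro p q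
  obtain ⟨u, hu⟩ := anch p
  obtain ⟨v, hv⟩ := anch q
  exact hu.trans ((key u v).trans hv.symm)

lemma star_subsingleton [Subsingleton V] : Subsingleton (V ⊕ (G.edgeSet × Bool)) := by
  haveI : IsEmpty G.edgeSet := ⟨fun E =>
    Set.eq_empty_iff_forall_notMem.mp (edgeSet_eq_empty_of_subsingleton G) _ E.2⟩
  constructor
  rintro (a | ⟨E, b⟩) (c | ⟨E', b'⟩)
  · rw [Subsingleton.elim a c]
  · exact isEmptyElim E'
  · exact isEmptyElim E
  · exact isEmptyElim E

end Stmt15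

theorem stmt15 {V : Type*} (G : SimpleGraph V) (hconn : G.Connected) :
    (∀ a b, (starG G).Adj a b → (a.isLeft ∧ b.isRight) ∨ (a.isRight ∧ b.isLeft)) ∧
      (∀ w : G.edgeSet × Bool, ((starG G).neighborSet (Sum.inr w)).ncard = 2) ∧
      (pd G = 1 ↔ pd (starG G) = 1) := by
  refine ⟨?_, ?_, ?_⟩
  · intro a b hadj
    rcases Stmt15.starG_adj_cases hadj with ⟨u, E, x, rfl, rfl, -⟩ | ⟨u, E, x, rfl, rfl, -⟩
    · exact Or.inl ⟨rfl, rfl⟩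
    · exact Or.inr ⟨rfl, rfl⟩
  · rintro ⟨E, b⟩
    have hne : (Sum.inl (Stmt15.efst (E : Sym2 V)) : V ⊕ (G.edgeSet × Bool)) ≠
        Sum.inl (Stmt15.esnd (E : Sym2 V)) := by
      simpa using Stmt15.efst_ne_esnd E.2
    have hset : (starG G).neighborSet (Sum.inr (E, b)) =
        {Sum.inl (Stmt15.efst (E : Sym2 V)), Sum.inl (Stmt15.esnd (E : Sym2 V))} := by
      ext a
      simp only [SimpleGraph.mem_neighborSet, Set.mem_insert_iff, Set.mem_singleton_iff]
      constructor
      · intro h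
        rcases Stmt15.starG_adj_cases h with ⟨u, E', x, h1, h2, h3⟩ | ⟨u, E', x, h1, h2, h3⟩
        · exact absurd h1 (by simp)
        · simp only [Sum.inr.injEq, Prod.mk.injEq] at h2
          obtain ⟨rfl, rfl⟩ := h2
          rcases Stmt15.mem_cases h3 with rfl | rfl
          · exact Or.inl h1
          · exact Or.inr h1
      · rintro (rfl | rfl)
        · exact (Stmt15.starG_adj_inl_inr (Stmt15.efst_mem _)).symm
        · exact (Stmt15.starG_adj_inl_inr (Stmt15.esnd_mem _)).symm
    rw [hset]
    exact Set.ncard_pair hne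
  · by_cases hsub : Subsingleton V
    · haveI := hsub
      haveI := Stmt15.star_subsingleton (G := G)
      rw [Stmt15.pd_subsingleton G, Stmt15.pd_subsingleton (starG G)]
    · rw [not_subsingleton_iff_nontrivial] at hsub
      obtain ⟨x, y, hxy⟩ := hsub.exists_pair_ne
      rw [Stmt15.pd_eq_one_iff G hconn ⟨x, y, hxy⟩,
        Stmt15.pd_eq_one_iff (starG G) (Stmt15.star_connected hconn)
          ⟨Sum.inl x, Sum.inl y, by simp [hxy]⟩]
      exact ⟨fun h p q hpq => Stmt15.main_fwd h p q hpq,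
        fun h => Stmt15.main_bwd h⟩
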